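/- In a (P₂+P₃, C₄)-free graph G containing an induced 5-cycle C = v₁...v₅, the set T of vertices outside C with no neighbor on C is an independent set, and T is anticomplete to A ∪ B ∪ D (vertices with exactly 1, 2 consecutive, or 3 consecutive neighbors on C respectively). -/

import Mathlib

open SimpleGraph

/-- A proper coloring of `G` with colors in `Fin ℓ`. -/
def IsProperColoring {V : Type*} (G : SimpleGraph V) (ℓ : ℕ) (f : V → Fin ℓ) : Prop :=
  ∀ ⦃a b : V⦄, G.Adj a b → f a ≠ f b

/-- A walk in the reconfiguration graph `R_ℓ(G)`: a sequence `c 0, c 1, …, c m` of proper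
`ℓ`-colorings of `G` in which consecutive colorings differ on at most one vertex. -/
def IsRecolorSeq {V : Type*} (G : SimpleGraph V) (ℓ m : ℕ) (c : ℕ → V → Fin ℓ) : Prop :=
  (∀ i ≤ m, IsProperColoring G ℓ (c i)) ∧
    ∀ i < m, ∀ a b : V, a ≠ b → c i a ≠ c (i + 1) a → c i b = c (i + 1) b

/-- The number of times the vertex `a` is recolored along the sequence `c 0, …, c m`. -/
def recolorCount {V : Type*} {ℓ : ℕ} (m : ℕ) (c : ℕ → V → Fin ℓ) (a : V) : ℕ :=
  ((Finset.range m).filter fun i => c i a ≠ c (i + 1) a).card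

/-- The cycle `Cₙ` on `Fin n` (for `n ≥ 3`). -/
def cyc (n : ℕ) [NeZero n] : SimpleGraph (Fin n) := SimpleGraph.fromRel fun a b => a + 1 = b

/-- The graph `P₂ + P₃`, the disjoint union of an edge and a path on three vertices. -/
def p2p3 : SimpleGraph (Fin 5) := SimpleGraph.fromRel fun a b =>
  (a = 0 ∧ b = 1) ∨ (a = 2 ∧ b = 3) ∨ (a = 3 ∧ b = 4)

/-- Membership in `A`: a vertex outside the 5-cycle with exactly one neighbor on it. -/
def inA5 {V : Type*} (G : SimpleGraph V) (v : Fin 5 → V) (u : V) : Prop :=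
  (∀ i, u ≠ v i) ∧ ∃ i : Fin 5, ∀ j, G.Adj u (v j) ↔ j = i

/-- Membership in `B`: a vertex outside the 5-cycle whose neighbors on the cycle are
exactly two consecutive vertices. -/
def inB5 {V : Type*} (G : SimpleGraph V) (v : Fin 5 → V) (u : V) : Prop :=
  (∀ i, u ≠ v i) ∧ ∃ i : Fin 5, ∀ j, G.Adj u (v j) ↔ (j = i ∨ j = i + 1)

/-- Membership in `D`: a vertex outside the 5-cycle whose neighbors on the cycle are
exactly three consecutive vertices. -/
def inD5 {V : Type*} (G : SimpleGraph V) (v : Fin 5 → V) (u : V) : Prop :=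
  (∀ i, u ≠ v i) ∧ ∃ i : Fin 5, ∀ j, G.Adj u (v j) ↔ (j = i - 1 ∨ j = i ∨ j = i + 1)

/-- Membership in `T`: a vertex outside the 5-cycle with no neighbor on it. -/
def inT5 {V : Type*} (G : SimpleGraph V) (v : Fin 5 → V) (u : V) : Prop :=
  (∀ i, u ≠ v i) ∧ ∀ i, ¬ G.Adj u (v i)

/-- If `G` contains five vertices whose induced adjacency pattern is exactly `P₂ + P₃`,
then there is an embedding of `p2p3` into `G`. -/
lemma found_p2p3 {V : Type*} (G : SimpleGraph V) (a0 a1 a2 a3 a4 : V)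
    (e01 : G.Adj a0 a1) (e23 : G.Adj a2 a3) (e34 : G.Adj a3 a4)
    (n02 : ¬ G.Adj a0 a2) (n03 : ¬ G.Adj a0 a3) (n04 : ¬ G.Adj a0 a4)
    (n12 : ¬ G.Adj a1 a2) (n13 : ¬ G.Adj a1 a3) (n14 : ¬ G.Adj a1 a4)
    (n24 : ¬ G.Adj a2 a4)
    (d02 : a0 ≠ a2) (d03 : a0 ≠ a3) (d04 : a0 ≠ a4)
    (d12 : a1 ≠ a2) (d13 : a1 ≠ a3) (d14 : a1 ≠ a4)
    (d24 : a2 ≠ a4) : Nonempty (p2p3 ↪g G) := by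
  refine ⟨⟨⟨![a0,a1,a2,a3,a4], ?_⟩, ?_⟩⟩
  · intro x y h
    fin_cases x <;> fin_cases y <;>
      simp_all [e01.ne, e23.ne, e34.ne, e01.ne', e23.ne', e34.ne',
        d02.symm, d03.symm, d04.symm, d12.symm, d13.symm, d14.symm, d24.symm]
  · intro x y
    show G.Adj (![a0,a1,a2,a3,a4] x) (![a0,a1,a2,a3,a4] y) ↔ p2p3.Adj x y
    have s02 := fun h => n02 (G.adj_symm h)
    have s03 := fun h => n03 (G.adj_symm h)
    have s04 := fun h => n04 (G.adj_symm h)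
    have s12 := fun h => n12 (G.adj_symm h)
    have s13 := fun h => n13 (G.adj_symm h)
    have s14 := fun h => n14 (G.adj_symm h)
    have s24 := fun h => n24 (G.adj_symm h)
    fin_cases x <;> fin_cases y <;>
      simp_all [p2p3, G.adj_symm e01, G.adj_symm e23, G.adj_symm e34, G.irrefl]

/-- in a `(P₂+P₃, C₄)`-free graph with an induced 5-cycle, `T` is an
independent set and `T` is anticomplete to `A ∪ B ∪ D`. -/
theorem stmt2 {V : Type*} (G : SimpleGraph V)
    (hP : ¬ Nonempty (p2p3 ↪g G)) (hC4 : ¬ Nonempty (cyc 4 ↪g G))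
    (v : Fin 5 → V) (hv : Function.Injective v)
    (hC : ∀ i j, G.Adj (v i) (v j) ↔ (cyc 5).Adj i j) :
    (∀ t t', inT5 G v t → inT5 G v t' → ¬ G.Adj t t') ∧
    (∀ t u, inT5 G v t → (inA5 G v u ∨ inB5 G v u ∨ inD5 G v u) → ¬ G.Adj t u) := by
  constructor
  · intro t t' ht ht' hadj
    refine hP (found_p2p3 G t t' (v 0) (v 1) (v 2) hadj
      ((hC 0 1).mpr (by simp only [cyc, SimpleGraph.fromRel_adj]; decide)) ((hC 1 2).mpr (by simp only [cyc, SimpleGraph.fromRel_adj]; decide))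
      (ht.2 0) (ht.2 1) (ht.2 2) (ht'.2 0) (ht'.2 1) (ht'.2 2)
      (fun h => (by simp only [cyc, SimpleGraph.fromRel_adj]; decide : ¬ (cyc 5).Adj 0 2) ((hC 0 2).mp h))
      (ht.1 0) (ht.1 1) (ht.1 2) (ht'.1 0) (ht'.1 1) (ht'.1 2)
      (hv.ne (by decide)))
  · intro t u ht hu hadj
    -- extract an index i with: u adjacent to v i, u not adjacent to v (i+2), v (i+3)
    obtain ⟨hout, i, h1, h2, h3⟩ :
        (∀ j, u ≠ v j) ∧ ∃ i : Fin 5, G.Adj u (v i) ∧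
          ¬ G.Adj u (v (i + 2)) ∧ ¬ G.Adj u (v (i + 3)) := by
      rcases hu with ⟨hout, i, hiff⟩ | ⟨hout, i, hiff⟩ | ⟨hout, i, hiff⟩ <;>
        refine ⟨hout, i, (hiff i).mpr (by fin_cases i <;> decide),
          fun h => ?_, fun h => ?_⟩ <;>
        · have := (hiff _).mp h
          revert this; fin_cases i <;> decide
    refine hP (found_p2p3 G (v (i+2)) (v (i+3)) t u (v i)
      ((hC _ _).mpr (by simp only [cyc, SimpleGraph.fromRel_adj]; fin_cases i <;> decide)) hadj h1
      (fun h => ht.2 _ (G.adj_symm h))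
      (fun h => h2 (G.adj_symm h))
      (fun h => (by simp only [cyc, SimpleGraph.fromRel_adj]; fin_cases i <;> decide : ¬ (cyc 5).Adj (i+2) i) ((hC _ _).mp h))
      (fun h => ht.2 _ (G.adj_symm h))
      (fun h => h3 (G.adj_symm h))
      (fun h => (by simp only [cyc, SimpleGraph.fromRel_adj]; fin_cases i <;> decide : ¬ (cyc 5).Adj (i+3) i) ((hC _ _).mp h))
      (ht.2 i)
      ((ht.1 (i+2)).symm) ((hout (i+2)).symm) (hv.ne (by fin_cases i <;> decide))
      ((ht.1 (i+3)).symm) ((hout (i+3)).symm) (hv.ne (by fin_cases i <;> decide))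
      (ht.1 i))
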